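/- Let A, B ∈ SL(3,ℝ) be commuting matrices such that the homomorphism ρ : ℤ² → SL(3,ℝ), ρ(n,m) = Aⁿ·Bᵐ, is injective and has discrete image, and suppose that ρ(ℤ²) is not contained in any minimal horospherical subgroup of SL(3,ℝ), i.e., there is no g ∈ SL(3,ℝ) with g·ρ(ℤ²)·g⁻¹ ⊆ U₁ or g·ρ(ℤ²)·g⁻¹ ⊆ U₂. Then the limit set of Γ = ρ(ℤ²) in the projective plane ℙ(ℝ³) — namely the set of one-dimensional subspaces of ℝ³ of the form range(L), where L ranges over all rank-one 3×3 real matrices that arise as limits of sequences (γ_n/‖γ_n‖) for sequences (γ_n) of pairwise distinct elements of Γ — contains at most 3 elements. -/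

import Mathlib

open Filter

/-- Frobenius (entrywise ℓ²) norm of a 3×3 real matrix. -/
noncomputable def frobNorm (g : Matrix (Fin 3) (Fin 3) ℝ) : ℝ :=
  Real.sqrt (∑ i, ∑ j, (g i j) ^ 2)

/-- Topology on SL(3,ℝ) induced from the space of matrices. -/
instance : TopologicalSpace (Matrix.SpecialLinearGroup (Fin 3) ℝ) :=
  TopologicalSpace.induced (fun g => (g : Matrix (Fin 3) (Fin 3) ℝ)) inferInstance

section Helpers
open Matrix Submodule

abbrev Mat3 := Matrix (Fin 3) (Fin 3) ℝ
abbrev V3 := Fin 3 → ℝ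
abbrev SL3 := Matrix.SpecialLinearGroup (Fin 3) ℝ

/-- subgroup of `SL3` fixing two vectors -/
def fixSub (v₁ v₂ : V3) : Subgroup SL3 where
  carrier := {g | (↑g : Mat3).mulVec v₁ = v₁ ∧ (↑g : Mat3).mulVec v₂ = v₂}
  one_mem' := by
    constructor <;> rw [Matrix.SpecialLinearGroup.coe_one, Matrix.one_mulVec]
  mul_mem' := by
    rintro a b ⟨ha1, ha2⟩ ⟨hb1, hb2⟩
    constructor <;> rw [Matrix.SpecialLinearGroup.coe_mul, ← Matrix.mulVec_mulVec]
    · rw [hb1, ha1]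
    · rw [hb2, ha2]
  inv_mem' := by
    rintro a ⟨ha1, ha2⟩
    have key : ∀ x : V3, (↑a : Mat3).mulVec x = x → (↑(a⁻¹) : Mat3).mulVec x = x := by
      intro x hx
      conv_lhs => rw [← hx]
      rw [Matrix.mulVec_mulVec, ← Matrix.SpecialLinearGroup.coe_mul, inv_mul_cancel,
        Matrix.SpecialLinearGroup.coe_one, Matrix.one_mulVec]
    exact ⟨key v₁ ha1, key v₂ ha2⟩

/-- subgroup of `SL3` scaling `v₁, v₂` by a common factor and scaling `u` -/
def scaleSub (v₁ v₂ u : V3) : Subgroup SL3 where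
  carrier := {g | ∃ χ σ : ℝ, χ ≠ 0 ∧ σ ≠ 0 ∧ (↑g : Mat3).mulVec v₁ = χ • v₁ ∧
    (↑g : Mat3).mulVec v₂ = χ • v₂ ∧ (↑g : Mat3).mulVec u = σ • u}
  one_mem' := by
    refine ⟨1, 1, one_ne_zero, one_ne_zero, ?_, ?_, ?_⟩ <;>
      rw [Matrix.SpecialLinearGroup.coe_one, Matrix.one_mulVec, one_smul]
  mul_mem' := by
    rintro a b ⟨χa, σa, hχa, hσa, ha1, ha2, ha3⟩ ⟨χb, σb, hχb, hσb, hb1, hb2, hb3⟩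
    refine ⟨χa * χb, σa * σb, mul_ne_zero hχa hχb, mul_ne_zero hσa hσb, ?_, ?_, ?_⟩ <;>
      rw [Matrix.SpecialLinearGroup.coe_mul, ← Matrix.mulVec_mulVec]
    · rw [hb1, Matrix.mulVec_smul, ha1, smul_smul, mul_comm]
    · rw [hb2, Matrix.mulVec_smul, ha2, smul_smul, mul_comm]
    · rw [hb3, Matrix.mulVec_smul, ha3, smul_smul, mul_comm]
  inv_mem' := by
    rintro a ⟨χa, σa, hχa, hσa, ha1, ha2, ha3⟩
    have key : ∀ (x : V3) (c : ℝ), c ≠ 0 → (↑a : Mat3).mulVec x = c • x →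
        (↑(a⁻¹) : Mat3).mulVec x = c⁻¹ • x := by
      intro x c hc hx
      have h1 : (↑(a⁻¹) : Mat3).mulVec ((↑a : Mat3).mulVec x) = x := by
        rw [Matrix.mulVec_mulVec, ← Matrix.SpecialLinearGroup.coe_mul, inv_mul_cancel,
          Matrix.SpecialLinearGroup.coe_one, Matrix.one_mulVec]
      rw [hx, Matrix.mulVec_smul] at h1
      calc (↑(a⁻¹) : Mat3).mulVec x
          = c⁻¹ • (c • ((↑(a⁻¹) : Mat3).mulVec x)) := by
            rw [smul_smul, inv_mul_cancel₀ hc, one_smul]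
        _ = c⁻¹ • x := by rw [h1]
    exact ⟨χa⁻¹, σa⁻¹, inv_ne_zero hχa, inv_ne_zero hσa, key v₁ χa hχa ha1,
      key v₂ χa hχa ha2, key u σa hσa ha3⟩

lemma three_cover {α : Type*} [Nonempty α] (S : Set α)
    (h : ∀ a b c d, a ∈ S → b ∈ S → c ∈ S → d ∈ S →
      a = b ∨ a = c ∨ a = d ∨ b = c ∨ b = d ∨ c = d) :
    ∃ x y z : α, S ⊆ {x, y, z} := by
  classical
  by_cases h1 : ∃ a, a ∈ S
  · obtain ⟨a, ha⟩ := h1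
    by_cases h2 : ∃ b ∈ S, b ≠ a
    · obtain ⟨b, hb, hba⟩ := h2
      by_cases h3 : ∃ c ∈ S, c ≠ a ∧ c ≠ b
      · obtain ⟨c, hc, hca, hcb⟩ := h3
        refine ⟨a, b, c, fun d hd => ?_⟩
        rcases h a b c d ha hb hc hd with h' | h' | h' | h' | h' | h' <;>
          simp_all [Set.mem_insert_iff]
      · push_neg at h3
        refine ⟨a, b, b, fun d hd => ?_⟩
        rcases eq_or_ne d a with rfl | hda
        · simp
        · rcases eq_or_ne d b with rfl | hdb
          · simp
          · exact absurd (h3 d hd hda) (by simpa using hdb)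
    · push_neg at h2
      exact ⟨a, a, a, fun d hd => by simp [h2 d hd]⟩
  · push_neg at h1
    obtain ⟨a⟩ := ‹Nonempty α›
    exact ⟨a, a, a, fun d hd => absurd hd (h1 d)⟩

lemma scalar_tendsto {x : V3} (hx : x ≠ 0) {c : ℕ → ℝ} {y : V3}
    (h : Filter.Tendsto (fun n => c n • x) atTop (nhds y)) :
    ∃ a : ℝ, Filter.Tendsto c atTop (nhds a) ∧ y = a • x := by
  obtain ⟨i, hi⟩ : ∃ i, x i ≠ 0 := by
    by_contra hc; push_neg at hc; exact hx (funext hc)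
  have h1 : Filter.Tendsto (fun n => c n * x i) atTop (nhds (y i)) :=
    ((continuous_apply i).tendsto y).comp h
  have h2 : Filter.Tendsto c atTop (nhds (y i / x i)) := by
    have := h1.div_const (x i)
    simpa [mul_div_assoc, div_self hi] using this
  refine ⟨y i / x i, h2, ?_⟩
  exact tendsto_nhds_unique h (h2.smul_const x)

lemma mulVec_tendsto {F : ℕ → Mat3} {L : Mat3} (h : Filter.Tendsto F atTop (nhds L)) (v : V3) :
    Filter.Tendsto (fun n => (F n).mulVec v) atTop (nhds (L.mulVec v)) :=
  ((continuous_id.matrix_mulVec continuous_const).tendsto L).comp h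

lemma rank_one_exists_span {L : Mat3} (h : L.rank = 1) :
    ∃ v : V3, v ≠ 0 ∧ LinearMap.range (Matrix.toLin' L) = span ℝ {v} := by
  have hr : Module.finrank ℝ (LinearMap.range (Matrix.toLin' L)) = 1 := by
    rw [Matrix.toLin'_apply']; exact h
  have hne : LinearMap.range (Matrix.toLin' L) ≠ ⊥ := by
    intro hb; rw [hb] at hr; simp at hr
  obtain ⟨v, hv, hv0⟩ := Submodule.ne_bot_iff _ |>.mp hne
  refine ⟨v, hv0, ?_⟩
  refine (eq_of_le_of_finrank_le ?_ ?_).symm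
  · rwa [span_singleton_le_iff_mem]
  · rw [hr, finrank_span_singleton hv0]

lemma det_tri (M : Mat3) (b : Module.Basis (Fin 3) ℝ V3) (d0 d1 d2 p q : ℝ)
    (h0 : M.mulVec (b 0) = d0 • b 0) (h1 : M.mulVec (b 1) = d1 • b 1)
    (h2 : M.mulVec (b 2) = p • b 0 + q • b 1 + d2 • b 2) :
    M.det = d0 * d1 * d2 := by
  have key : LinearMap.toMatrix b b (Matrix.toLin' M) = !![d0, 0, p; 0, d1, q; 0, 0, d2] := by
    ext i j
    fin_cases i <;> fin_cases j <;>
      simp [LinearMap.toMatrix_apply, Matrix.toLin'_apply, h0, h1, h2, Finsupp.single_apply,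
        Matrix.vecHead, Matrix.vecTail]
  rw [← LinearMap.det_toLin' M, ← LinearMap.det_toMatrix b, key, Matrix.det_fin_three]
  simp [Matrix.vecHead, Matrix.vecTail]

lemma snoc_eq (v₁ v₂ u : V3) : ![v₁, v₂, u] = Fin.snoc ![v₁, v₂] u := by
  funext i; fin_cases i <;> simp [Fin.snoc] <;> rfl

lemma li_triple {v₁ v₂ u : V3} (h12 : LinearIndependent ℝ ![v₁, v₂])
    (hu : u ∉ span ℝ {v₁, v₂}) : LinearIndependent ℝ ![v₁, v₂, u] := by
  rw [snoc_eq, linearIndependent_fin_snoc]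
  refine ⟨h12, ?_⟩
  have : Set.range ![v₁, v₂] = {v₁, v₂} := by
    ext x; simp [Fin.exists_fin_two, or_comm]
  rwa [this]

lemma span_triple_top {v₁ v₂ u : V3} (h : LinearIndependent ℝ ![v₁, v₂, u]) :
    span ℝ {v₁, v₂, u} = ⊤ := by
  let hb := basisOfLinearIndependentOfCardEqFinrank h (by simp)
  have := hb.span_eq
  rw [show ⇑hb = ![v₁, v₂, u] from
    coe_basisOfLinearIndependentOfCardEqFinrank h (by simp)] at this
  have hr : Set.range ![v₁, v₂, u] = {v₁, v₂, u} := by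
    ext x; constructor
    · rintro ⟨i, rfl⟩; fin_cases i <;> simp
    · rintro (rfl | rfl | rfl)
      exacts [⟨0, rfl⟩, ⟨1, rfl⟩, ⟨2, rfl⟩]
  rwa [hr] at this

lemma pair_of_triple {v₁ v₂ u : V3} (h : LinearIndependent ℝ ![v₁, v₂, u]) :
    LinearIndependent ℝ ![v₁, v₂] := by
  have hcomp : ![v₁, v₂] = ![v₁, v₂, u] ∘ (Fin.castSucc : Fin 2 → Fin 3) := by
    funext i; fin_cases i <;> rfl
  rw [hcomp]
  exact h.comp _ (Fin.castSucc_injective 2)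

lemma range_eq_of_limit (v₁ v₂ u : V3) (hli : LinearIndependent ℝ ![v₁, v₂, u])
    (G : ℕ → Mat3) (χ σ : ℕ → ℝ)
    (hG1 : ∀ n, (G n).mulVec v₁ = χ n • v₁)
    (hG2 : ∀ n, (G n).mulVec v₂ = χ n • v₂)
    (hG3 : ∀ n, (G n).mulVec u = σ n • u)
    (c : ℕ → ℝ) (L : Mat3)
    (hlim : Filter.Tendsto (fun n => c n • G n) atTop (nhds L))
    (hrank : L.rank = 1) :
    LinearMap.range (Matrix.toLin' L) = span ℝ {u} := by
  have hv₁ : v₁ ≠ 0 := by simpa using hli.ne_zero 0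
  have hu : u ≠ 0 := by simpa using hli.ne_zero 2
  have hpair := pair_of_triple hli
  have key : ∀ w : V3, ∀ τ : ℕ → ℝ, (∀ n, (G n).mulVec w = τ n • w) →
      Filter.Tendsto (fun n => (c n * τ n) • w) atTop (nhds (L.mulVec w)) := by
    intro w τ hτ
    have := mulVec_tendsto hlim w
    simpa [Matrix.smul_mulVec, hτ, smul_smul] using this
  obtain ⟨a, hca, hLv₁⟩ := scalar_tendsto hv₁ (key v₁ χ hG1)
  have hLv₂ : L.mulVec v₂ = a • v₂ := tendsto_nhds_unique (key v₂ χ hG2) (hca.smul_const v₂)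
  obtain ⟨b, hcb, hLu⟩ := scalar_tendsto hu (key u σ hG3)
  have ha : a = 0 := by
    by_contra ha0
    obtain ⟨v, hv0, hsp⟩ := rank_one_exists_span hrank
    have hm1 : v₁ ∈ span ℝ {v} := by
      rw [← hsp]
      exact ⟨a⁻¹ • v₁, by simp [Matrix.toLin'_apply, Matrix.mulVec_smul, hLv₁, smul_smul,
        inv_mul_cancel₀ ha0]⟩
    have hm2 : v₂ ∈ span ℝ {v} := by
      rw [← hsp]
      exact ⟨a⁻¹ • v₂, by simp [Matrix.toLin'_apply, Matrix.mulVec_smul, hLv₂, smul_smul,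
        inv_mul_cancel₀ ha0]⟩
    obtain ⟨c₁, hc₁⟩ := mem_span_singleton.mp hm1
    obtain ⟨c₂, hc₂⟩ := mem_span_singleton.mp hm2
    have hc₁0 : c₁ ≠ 0 := by rintro rfl; simp at hc₁; exact hv₁ hc₁.symm
    have := (LinearIndependent.pair_iff.mp hpair (c₂ * c₁⁻¹) (-1)) ?_
    · exact absurd this.2 (by norm_num)
    · rw [← hc₁, ← hc₂]
      rw [smul_smul, mul_assoc, inv_mul_cancel₀ hc₁0, mul_one]
      module
  rw [ha, zero_smul] at hLv₁ hLv₂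
  have hrange : LinearMap.range (Matrix.toLin' L) = span ℝ {(0 : V3), 0, b • u} := by
    rw [LinearMap.range_eq_map, ← span_triple_top hli, Submodule.map_span]
    congr 1
    simp only [Set.image_insert_eq, Set.image_singleton, Matrix.toLin'_apply, hLv₁, hLv₂, hLu]
  rw [span_insert_zero, span_insert_zero] at hrange
  have hb : b ≠ 0 := by
    rintro rfl
    rw [zero_smul] at hrange
    obtain ⟨v, hv0, hsp⟩ := rank_one_exists_span hrank
    rw [hsp] at hrange
    have : v ∈ (span ℝ {(0:V3)} : Submodule ℝ V3) := hrange ▸ mem_span_singleton_self v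
    simp [mem_span_singleton] at this
    exact hv0 this
  rw [hrange, span_singleton_smul_eq (IsUnit.mk0 b hb) u]

lemma cube_eq_one {lam : ℝ} (h : lam * lam * lam = 1) : lam = 1 := by
  nlinarith [sq_nonneg (lam - 1), sq_nonneg (lam + 1), sq_nonneg lam]

noncomputable def triBasis {v₁ v₂ u : V3} (h : LinearIndependent ℝ ![v₁, v₂, u]) :
    Module.Basis (Fin 3) ℝ V3 :=
  basisOfLinearIndependentOfCardEqFinrank h (by simp)

lemma triBasis_coe {v₁ v₂ u : V3} (h : LinearIndependent ℝ ![v₁, v₂, u]) :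
    (triBasis h 0 = v₁) ∧ (triBasis h 1 = v₂) ∧ (triBasis h 2 = u) := by
  have hc : ⇑(triBasis h) = ![v₁, v₂, u] :=
    coe_basisOfLinearIndependentOfCardEqFinrank h (by simp)
  refine ⟨?_, ?_, ?_⟩ <;> rw [show triBasis h = _ from rfl] <;> simp [hc]

lemma expand_triple {v₁ v₂ u : V3} (h : LinearIndependent ℝ ![v₁, v₂, u]) (x : V3) :
    ∃ r0 r1 r2 : ℝ, x = r0 • v₁ + r1 • v₂ + r2 • u := by
  obtain ⟨h0, h1, h2⟩ := triBasis_coe h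
  have := (triBasis h).sum_repr x
  rw [Fin.sum_univ_three, h0, h1, h2] at this
  exact ⟨_, _, _, this.symm⟩

lemma exists_w_not_in_span {v₁ v₂ : V3} :
    ∃ w : V3, w ∉ span ℝ ({v₁, v₂} : Set V3) := by
  by_contra hc
  push_neg at hc
  have htop : span ℝ ({v₁, v₂} : Set V3) = ⊤ := eq_top_iff'.mpr hc
  have hle := finrank_span_le_card (R := ℝ) ({v₁, v₂} : Set V3)
  rw [htop, finrank_top] at hle
  have hcard : (Set.toFinset ({v₁, v₂} : Set V3)).card ≤ 2 := by
    rw [Set.toFinset_insert, Set.toFinset_singleton]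
    exact (Finset.card_insert_le _ _).trans (by simp)
  have h3 : Module.finrank ℝ V3 = 3 := by simp
  omega

lemma exists_u (Am Bm : Mat3) (hdetA : Am.det = 1) (hdetB : Bm.det = 1)
    (hAB : Am * Bm = Bm * Am) (v₁ v₂ : V3) (hp : LinearIndependent ℝ ![v₁, v₂])
    (lam mu : ℝ) (hl : lam ≠ 1)
    (hA1 : Am.mulVec v₁ = lam • v₁) (hA2 : Am.mulVec v₂ = lam • v₂)
    (hB1 : Bm.mulVec v₁ = mu • v₁) (hB2 : Bm.mulVec v₂ = mu • v₂) :
    ∃ (u : V3) (ν μ' : ℝ), lam ≠ 0 ∧ ν ≠ 0 ∧ mu ≠ 0 ∧ μ' ≠ 0 ∧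
      LinearIndependent ℝ ![v₁, v₂, u] ∧
      Am.mulVec u = ν • u ∧ Bm.mulVec u = μ' • u := by
  obtain ⟨w, hw⟩ := exists_w_not_in_span (v₁ := v₁) (v₂ := v₂)
  have hli3 := li_triple hp hw
  obtain ⟨p, q, ν', hAw⟩ := expand_triple hli3 (Am.mulVec w)
  obtain ⟨b0, b1, b2⟩ := triBasis_coe hli3
  have hdet : lam * lam * ν' = 1 := by
    rw [← hdetA]
    exact (det_tri Am (triBasis hli3) lam lam ν' p q
      (by rw [b0, hA1]) (by rw [b1, hA2]) (by rw [b0, b1, b2, hAw])).symm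
  have hlam0 : lam ≠ 0 := by rintro rfl; simp at hdet
  have hν'0 : ν' ≠ 0 := by rintro rfl; simp at hdet
  have hlν : lam - ν' ≠ 0 := by
    intro hc
    have : ν' = lam := by linarith
    subst this
    exact hl (cube_eq_one hdet)
  set c₁ := (lam - ν')⁻¹ * p with hc₁
  set c₂ := (lam - ν')⁻¹ * q with hc₂
  set u := w - c₁ • v₁ - c₂ • v₂ with hu
  have hAu : Am.mulVec u = ν' • u := by
    rw [hu, Matrix.mulVec_sub, Matrix.mulVec_sub, Matrix.mulVec_smul, Matrix.mulVec_smul,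
      hA1, hA2, hAw, hc₁, hc₂]
    match_scalars <;> field_simp <;> ring
  have hunot : u ∉ span ℝ ({v₁, v₂} : Set V3) := by
    intro hmem
    apply hw
    have hweq : w = u + c₁ • v₁ + c₂ • v₂ := by rw [hu]; module
    rw [hweq]
    exact add_mem (add_mem hmem (smul_mem _ _ (subset_span (by simp))))
      (smul_mem _ _ (subset_span (by simp)))
  have hli3u := li_triple hp hunot
  set C : Mat3 := Am - ν' • 1 with hC
  have hCv : ∀ x : V3, C.mulVec x = Am.mulVec x - ν' • x := by
    intro x
    rw [hC, Matrix.sub_mulVec, Matrix.smul_mulVec, Matrix.one_mulVec]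
  have hCu : C.mulVec u = 0 := by rw [hCv, hAu, sub_self]
  have hCB : C * Bm = Bm * C := by
    rw [hC, Matrix.sub_mul, Matrix.mul_sub, hAB, Matrix.smul_mul, Matrix.mul_smul,
      one_mul, mul_one]
  have hCBu : C.mulVec (Bm.mulVec u) = 0 := by
    rw [Matrix.mulVec_mulVec, hCB, ← Matrix.mulVec_mulVec, hCu, Matrix.mulVec_zero]
  obtain ⟨r0, r1, r2, hBu⟩ := expand_triple hli3u (Bm.mulVec u)
  have hkill : (r0 * (lam - ν')) • v₁ + (r1 * (lam - ν')) • v₂ = 0 := by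
    have hthis := hCBu
    rw [hBu] at hthis
    rw [Matrix.mulVec_add, Matrix.mulVec_add, Matrix.mulVec_smul, Matrix.mulVec_smul,
      Matrix.mulVec_smul, hCu, hCv, hCv, hA1, hA2] at hthis
    rw [← hthis]
    match_scalars <;> ring
  obtain ⟨hr0, hr1⟩ := LinearIndependent.pair_iff.mp hp _ _ hkill
  have hr0' : r0 = 0 := by
    rcases mul_eq_zero.mp hr0 with h | h
    · exact h
    · exact absurd h hlν
  have hr1' : r1 = 0 := by
    rcases mul_eq_zero.mp hr1 with h | h
    · exact h
    · exact absurd h hlν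
  rw [hr0', hr1', zero_smul, zero_smul, zero_add, zero_add] at hBu
  obtain ⟨c0, c1, c2⟩ := triBasis_coe hli3u
  have hdetB' : mu * mu * r2 = 1 := by
    rw [← hdetB]
    exact (det_tri Bm (triBasis hli3u) mu mu r2 0 0
      (by rw [c0, hB1]) (by rw [c1, hB2])
      (by rw [c0, c1, c2, hBu]; module)).symm
  have hmu0 : mu ≠ 0 := by rintro rfl; simp at hdetB'
  have hr20 : r2 ≠ 0 := by rintro rfl; simp at hdetB'
  exact ⟨u, ν', r2, hlam0, hν'0, hmu0, hr20, hli3u, hAu, hBu⟩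

lemma mat_ext_mulVec {M N : Mat3} (h : ∀ x, M.mulVec x = N.mulVec x) : M = N := by
  have : Matrix.toLin' M = Matrix.toLin' N :=
    LinearMap.ext fun x => by simp [Matrix.toLin'_apply, h x]
  exact Matrix.toLin'.injective this

def colMat (v₁ v₂ u : V3) : Mat3 := Matrix.of fun i j => ![v₁, v₂, u] j i

lemma colMat_mulVec (v₁ v₂ u : V3) (x : V3) :
    (colMat v₁ v₂ u).mulVec x = x 0 • v₁ + x 1 • v₂ + x 2 • u := by
  funext i
  simp [colMat, Matrix.mulVec, dotProduct, Fin.sum_univ_three]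
  ring

lemma colMat_det_ne_zero {v₁ v₂ u : V3} (h : LinearIndependent ℝ ![v₁, v₂, u]) :
    (colMat v₁ v₂ u).det ≠ 0 := by
  have hb : colMat v₁ v₂ u = (Pi.basisFun ℝ (Fin 3)).toMatrix ![v₁, v₂, u] := by
    ext i j
    rw [Module.Basis.toMatrix_apply]
    simp [colMat]
  have hspan : span ℝ (Set.range ![v₁, v₂, u]) = ⊤ := by
    rw [show Set.range ![v₁, v₂, u] = {v₁, v₂, u} by
      ext x
      constructor
      · rintro ⟨i, rfl⟩; fin_cases i <;> simp
      · rintro (rfl | rfl | rfl); exacts [⟨0, rfl⟩, ⟨1, rfl⟩, ⟨2, rfl⟩]]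
    exact span_triple_top h
  have := Module.Basis.is_basis_iff_det (Pi.basisFun ℝ (Fin 3)) |>.mp ⟨h, hspan⟩
  rw [Module.Basis.det_apply, ← hb] at this
  exact this.ne_zero

lemma colMat_neg (v₁ v₂ u : V3) : (colMat v₁ v₂ (-u)).det = -(colMat v₁ v₂ u).det := by
  have h1 : colMat v₁ v₂ (-u) =
      (colMat v₁ v₂ u).updateCol 2 ((-1 : ℝ) • fun i => (colMat v₁ v₂ u) i 2) := by
    ext i j
    fin_cases j <;> simp [colMat, Matrix.updateCol_apply]
  rw [h1, Matrix.det_updateCol_smul]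
  have : (colMat v₁ v₂ u).updateCol 2 (fun i => (colMat v₁ v₂ u) i 2) = colMat v₁ v₂ u :=
    Matrix.updateCol_eq_self _ _
  rw [this]
  ring

lemma exists_sl_conj (v₁ v₂ : V3) (hp : LinearIndependent ℝ ![v₁, v₂])
    (ρ : ℤ × ℤ → SL3)
    (hfix : ∀ w, ((ρ w : Mat3)).mulVec v₁ = v₁ ∧ ((ρ w : Mat3)).mulVec v₂ = v₂) :
    ∃ g : SL3, ∀ w : ℤ × ℤ, ∃ a b : ℝ,
      ↑(g * ρ w * g⁻¹) = !![(1:ℝ), 0, a; 0, 1, b; 0, 0, 1] := by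
  obtain ⟨w₀, hw₀⟩ := exists_w_not_in_span (v₁ := v₁) (v₂ := v₂)
  have hd₀ := colMat_det_ne_zero (li_triple hp hw₀)
  obtain ⟨w₁, hw₁, hdpos⟩ : ∃ w₁, w₁ ∉ span ℝ ({v₁, v₂} : Set V3) ∧
      0 < (colMat v₁ v₂ w₁).det := by
    rcases lt_or_gt_of_ne hd₀ with h | h
    · refine ⟨-w₀, fun hc => hw₀ ?_, by rw [colMat_neg]; linarith⟩
      simpa using neg_mem hc
    · exact ⟨w₀, hw₀, h⟩
  have hli3 := li_triple hp hw₁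
  set d := (colMat v₁ v₂ w₁).det with hd
  set s : ℝ := d ^ (-(3⁻¹) : ℝ) with hs
  have hspos : 0 < s := Real.rpow_pos_of_pos hdpos _
  set h : Mat3 := s • colMat v₁ v₂ w₁ with hh
  have hdeth : h.det = 1 := by
    rw [hh, Matrix.det_smul, ← hd]
    have : s ^ (Fintype.card (Fin 3)) = d⁻¹ := by
      rw [Fintype.card_fin, hs, ← Real.rpow_natCast (d ^ (-(3⁻¹) : ℝ)) 3,
        ← Real.rpow_mul hdpos.le]
      norm_num
      exact Real.rpow_neg_one d
    rw [this, inv_mul_cancel₀ hdpos.ne']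
  have hhx : ∀ x : V3, h.mulVec x = (s * x 0) • v₁ + (s * x 1) • v₂ + (s * x 2) • w₁ := by
    intro x
    rw [hh, Matrix.smul_mulVec, colMat_mulVec]
    module
  set Hsl : SL3 := ⟨h, hdeth⟩ with hHsl
  refine ⟨Hsl⁻¹, fun w => ?_⟩
  obtain ⟨aw, bw, ew, hweq⟩ := expand_triple hli3 (((ρ w) : Mat3).mulVec w₁)
  obtain ⟨b0, b1, b2⟩ := triBasis_coe hli3
  have hew : ew = 1 := by
    have hdet1 : ((ρ w : Mat3)).det = 1 := (ρ w).2
    have := det_tri (ρ w : Mat3) (triBasis hli3) 1 1 ew aw bw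
      (by rw [b0, (hfix w).1, one_smul]) (by rw [b1, (hfix w).2, one_smul])
      (by rw [b0, b1, b2]; exact hweq)
    rw [hdet1] at this
    linarith
  rw [hew, one_smul] at hweq
  set M : Mat3 := !![(1:ℝ), 0, aw; 0, 1, bw; 0, 0, 1] with hM
  have hdetM : M.det = 1 := by
    rw [hM, Matrix.det_fin_three]; simp [Matrix.vecHead, Matrix.vecTail]
  have hMx : ∀ x : V3, M.mulVec x = ![x 0 + aw * x 2, x 1 + bw * x 2, x 2] := by
    intro x
    funext i
    fin_cases i <;> simp [hM, Matrix.mulVec, dotProduct, Fin.sum_univ_three]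
  have key : (↑(ρ w) : Mat3) * h = h * M := by
    apply mat_ext_mulVec
    intro x
    rw [← Matrix.mulVec_mulVec, ← Matrix.mulVec_mulVec, hhx, hMx, hhx]
    simp only [Matrix.mulVec_add, Matrix.mulVec_smul, (hfix w).1, (hfix w).2, hweq,
      Matrix.cons_val_zero, Matrix.cons_val_one, Matrix.head_cons, Matrix.cons_val_two,
      Matrix.tail_cons]
    module
  have hslkey : ρ w * Hsl = Hsl * (show SL3 from ⟨M, hdetM⟩) := Subtype.ext (by exact key)
  refine ⟨aw, bw, ?_⟩
  have : Hsl⁻¹ * ρ w * (Hsl⁻¹)⁻¹ = (show SL3 from ⟨M, hdetM⟩) := by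
    rw [inv_inv, mul_assoc, hslkey, ← mul_assoc, inv_mul_cancel, one_mul]
  rw [this]

end Helpers

/-- If a discrete ℤ² subgroup ⟨A, B⟩ of SL(3,ℝ) is not contained in any minimal
horospherical subgroup, then its limit set in ℙ(ℝ³) contains at most 3 points. -/
theorem limit_set_of_nonhorospherical_Z2_small
    (A B : Matrix.SpecialLinearGroup (Fin 3) ℝ)
    (hcomm : A * B = B * A)
    (ρ : ℤ × ℤ → Matrix.SpecialLinearGroup (Fin 3) ℝ)
    (hρ : ∀ v : ℤ × ℤ, ρ v = A ^ v.1 * B ^ v.2)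
    (hinj : Function.Injective ρ)
    (hdisc : DiscreteTopology (Set.range ρ))
    (hnothoro : ¬ ∃ g : Matrix.SpecialLinearGroup (Fin 3) ℝ,
      (∀ v : ℤ × ℤ, ∃ a b : ℝ,
        ↑(g * ρ v * g⁻¹) = !![1, a, b; 0, 1, 0; 0, 0, 1]) ∨
      (∀ v : ℤ × ℤ, ∃ a b : ℝ,
        ↑(g * ρ v * g⁻¹) = !![1, 0, a; 0, 1, b; 0, 0, 1])) :
    ∃ x y z : Submodule ℝ (Fin 3 → ℝ),
      { V : Submodule ℝ (Fin 3 → ℝ) |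
        ∃ L : Matrix (Fin 3) (Fin 3) ℝ,
          (∃ γ : ℕ → ℤ × ℤ, Function.Injective γ ∧
            Tendsto
              (fun n => (frobNorm ↑(ρ (γ n)))⁻¹ • (↑(ρ (γ n)) : Matrix (Fin 3) (Fin 3) ℝ))
              atTop (nhds L)) ∧
          L.rank = 1 ∧ V = LinearMap.range (Matrix.toLin' L) }
        ⊆ {x, y, z} := by
  classical
  set Am : Mat3 := ↑A with hAm
  set Bm : Mat3 := ↑B with hBm
  have hABm : Am * Bm = Bm * Am := by
    rw [hAm, hBm, ← Matrix.SpecialLinearGroup.coe_mul, ← Matrix.SpecialLinearGroup.coe_mul,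
      hcomm]
  have hdetA : Am.det = 1 := A.2
  have hdetB : Bm.det = 1 := B.2
  set S := { V : Submodule ℝ (Fin 3 → ℝ) |
      ∃ L : Matrix (Fin 3) (Fin 3) ℝ,
        (∃ γ : ℕ → ℤ × ℤ, Function.Injective γ ∧
          Filter.Tendsto
            (fun n => (frobNorm ↑(ρ (γ n)))⁻¹ • (↑(ρ (γ n)) : Matrix (Fin 3) (Fin 3) ℝ))
            atTop (nhds L))
        ∧ L.rank = 1 ∧ V = LinearMap.range (Matrix.toLin' L) } with hS
  -- commutation of limits with A and B
  have hcommρ : ∀ w : ℤ × ℤ, Commute A (ρ w) ∧ Commute B (ρ w) := by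
    intro w
    rw [hρ]
    constructor
    · exact ((Commute.refl A).zpow_right w.1).mul_right
        ((show Commute A B from hcomm).zpow_right w.2)
    · exact (((show Commute A B from hcomm).symm).zpow_right w.1).mul_right
        ((Commute.refl B).zpow_right w.2)
  have hlimcomm : ∀ L : Mat3,
      (∃ γ : ℕ → ℤ × ℤ, Function.Injective γ ∧
        Filter.Tendsto
          (fun n => (frobNorm ↑(ρ (γ n)))⁻¹ • (↑(ρ (γ n)) : Mat3)) atTop (nhds L)) →
      Am * L = L * Am ∧ Bm * L = Bm * L ∧ Bm * L = L * Bm := by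
    intro L ⟨γ, hγ, hlim⟩
    have key : ∀ (Cm : Mat3), (∀ n, Cm * (↑(ρ (γ n)) : Mat3) = ↑(ρ (γ n)) * Cm) →
        Cm * L = L * Cm := by
      intro Cm hcom
      have h1 : Filter.Tendsto
          (fun n => Cm * ((frobNorm ↑(ρ (γ n)))⁻¹ • (↑(ρ (γ n)) : Mat3)))
          atTop (nhds (Cm * L)) :=
        ((continuous_const.matrix_mul continuous_id).tendsto L).comp hlim
      have h2 : Filter.Tendsto
          (fun n => ((frobNorm ↑(ρ (γ n)))⁻¹ • (↑(ρ (γ n)) : Mat3)) * Cm)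
          atTop (nhds (L * Cm)) :=
        ((continuous_id.matrix_mul continuous_const).tendsto L).comp hlim
      have heq : (fun n => Cm * ((frobNorm ↑(ρ (γ n)))⁻¹ • (↑(ρ (γ n)) : Mat3)))
          = (fun n => ((frobNorm ↑(ρ (γ n)))⁻¹ • (↑(ρ (γ n)) : Mat3)) * Cm) := by
        funext n
        rw [Matrix.mul_smul, Matrix.smul_mul, hcom n]
      rw [heq] at h1
      exact tendsto_nhds_unique h1 h2
    refine ⟨key Am fun n => ?_, rfl, key Bm fun n => ?_⟩
    · rw [hAm, ← Matrix.SpecialLinearGroup.coe_mul, ← Matrix.SpecialLinearGroup.coe_mul,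
        ((hcommρ (γ n)).1).eq]
    · rw [hBm, ← Matrix.SpecialLinearGroup.coe_mul, ← Matrix.SpecialLinearGroup.coe_mul,
        ((hcommρ (γ n)).2).eq]
  -- structure of elements of S
  have hSstruct : ∀ V ∈ S, ∃ v : V3, v ≠ 0 ∧ V = Submodule.span ℝ {v} ∧
      ∃ lam mu : ℝ, Am.mulVec v = lam • v ∧ Bm.mulVec v = mu • v := by
    intro V hV
    obtain ⟨L, hγex, hrank, hVeq⟩ := hV
    obtain ⟨hAL, -, hBL⟩ := hlimcomm L hγex
    obtain ⟨v, hv0, hsp⟩ := rank_one_exists_span hrank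
    have hvmem : v ∈ LinearMap.range (Matrix.toLin' L) := by
      rw [hsp]; exact Submodule.mem_span_singleton_self v
    obtain ⟨x, hx⟩ := hvmem
    have heig : ∀ (Cm : Mat3), Cm * L = L * Cm → ∃ lam : ℝ, Cm.mulVec v = lam • v := by
      intro Cm hCL
      have : Cm.mulVec v = L.mulVec (Cm.mulVec x) := by
        rw [← hx, Matrix.toLin'_apply, Matrix.mulVec_mulVec, hCL, ← Matrix.mulVec_mulVec]
      have hmem : Cm.mulVec v ∈ LinearMap.range (Matrix.toLin' L) :=
        ⟨Cm.mulVec x, by rw [Matrix.toLin'_apply, ← this]⟩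
      rw [hsp, Submodule.mem_span_singleton] at hmem
      obtain ⟨lam, hlam⟩ := hmem
      exact ⟨lam, hlam.symm⟩
    obtain ⟨lam, hlam⟩ := heig Am hAL
    obtain ⟨mu, hmu⟩ := heig Bm hBL
    exact ⟨v, hv0, hVeq.trans hsp, lam, mu, hlam, hmu⟩
  by_cases hEP : ∃ (v₁ v₂ : V3) (lam mu : ℝ), LinearIndependent ℝ ![v₁, v₂] ∧
      Am.mulVec v₁ = lam • v₁ ∧ Am.mulVec v₂ = lam • v₂ ∧
      Bm.mulVec v₁ = mu • v₁ ∧ Bm.mulVec v₂ = mu • v₂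
  · obtain ⟨v₁, v₂, lam, mu, hp, hA1, hA2, hB1, hB2⟩ := hEP
    by_cases hone : lam = 1 ∧ mu = 1
    · -- horospherical contradiction
      exfalso
      obtain ⟨rfl, rfl⟩ := hone
      rw [one_smul] at hA1 hA2 hB1 hB2
      have hmemA : A ∈ fixSub v₁ v₂ := ⟨hA1, hA2⟩
      have hmemB : B ∈ fixSub v₁ v₂ := ⟨hB1, hB2⟩
      have hmemρ : ∀ w : ℤ × ℤ, ρ w ∈ fixSub v₁ v₂ := by
        intro w
        rw [hρ]
        exact Subgroup.mul_mem _ (Subgroup.zpow_mem _ hmemA _) (Subgroup.zpow_mem _ hmemB _)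
      obtain ⟨g, hg⟩ := exists_sl_conj v₁ v₂ hp ρ hmemρ
      exact hnothoro ⟨g, Or.inr hg⟩
    · -- scaled case
      have hswap : ∃ (u : V3) (νA νB : ℝ), νA ≠ 0 ∧ νB ≠ 0 ∧ lam ≠ 0 ∧ mu ≠ 0 ∧
          LinearIndependent ℝ ![v₁, v₂, u] ∧
          Am.mulVec u = νA • u ∧ Bm.mulVec u = νB • u := by
        rcases not_and_or.mp hone with hl | hm
        · obtain ⟨u, ν, μ', h1, h2, h3, h4, h5, h6, h7⟩ :=
            exists_u Am Bm hdetA hdetB hABm v₁ v₂ hp lam mu hl hA1 hA2 hB1 hB2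
          exact ⟨u, ν, μ', h2, h4, h1, h3, h5, h6, h7⟩
        · obtain ⟨u, ν, μ', h1, h2, h3, h4, h5, h6, h7⟩ :=
            exists_u Bm Am hdetB hdetA hABm.symm v₁ v₂ hp mu lam hm hB1 hB2 hA1 hA2
          exact ⟨u, μ', ν, h4, h2, h3, h1, h5, h7, h6⟩
      obtain ⟨u, νA, νB, hνA, hνB, hlam0, hmu0, hli3, hAu, hBu⟩ := hswap
      have hmemA : A ∈ scaleSub v₁ v₂ u := ⟨lam, νA, hlam0, hνA, hA1, hA2, hAu⟩
      have hmemB : B ∈ scaleSub v₁ v₂ u := ⟨mu, νB, hmu0, hνB, hB1, hB2, hBu⟩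
      have hmemρ : ∀ w : ℤ × ℤ, ρ w ∈ scaleSub v₁ v₂ u := by
        intro w
        rw [hρ]
        exact Subgroup.mul_mem _ (Subgroup.zpow_mem _ hmemA _) (Subgroup.zpow_mem _ hmemB _)
      refine ⟨Submodule.span ℝ {u}, Submodule.span ℝ {u}, Submodule.span ℝ {u}, fun V hV => ?_⟩
      obtain ⟨L, ⟨γ, hγ, hlim⟩, hrank, hVeq⟩ := hV
      have hmem : ∀ n : ℕ, ∃ χ σ : ℝ, χ ≠ 0 ∧ σ ≠ 0 ∧
          ((↑(ρ (γ n)) : Mat3)).mulVec v₁ = χ • v₁ ∧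
          ((↑(ρ (γ n)) : Mat3)).mulVec v₂ = χ • v₂ ∧
          ((↑(ρ (γ n)) : Mat3)).mulVec u = σ • u := fun n => hmemρ (γ n)
      choose χs σs hχ0 hσ0 hkv1 hkv2 hku using hmem
      have := range_eq_of_limit v₁ v₂ u hli3 (fun n => (↑(ρ (γ n)) : Mat3)) χs σs
        hkv1 hkv2 hku (fun n => (frobNorm ↑(ρ (γ n)))⁻¹) L hlim hrank
      rw [hVeq, this]
      simp
  · -- no common eigenplane: at most three common eigenlines
    refine three_cover S ?_
    intro V1 V2 V3' V4 h1 h2 h3 h4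
    by_contra hne
    push_neg at hne
    obtain ⟨h12, h13, h14, h23, h24, h34⟩ := hne
    set Vf : Fin 4 → Submodule ℝ V3 := ![V1, V2, V3', V4] with hVf
    have hVmem : ∀ i, Vf i ∈ S := by
      intro i; fin_cases i <;> assumption
    have hVinj : Function.Injective Vf := by
      intro i j hij
      by_contra hij'
      apply hij'
      fin_cases i <;> fin_cases j <;> simp [hVf] at hij ⊢ <;>
        first
          | rfl
          | exact absurd hij h12 | exact absurd hij h13 | exact absurd hij h14
          | exact absurd hij h23 | exact absurd hij h24 | exact absurd hij h34
          | exact absurd hij.symm h12 | exact absurd hij.symm h13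
          | exact absurd hij.symm h14 | exact absurd hij.symm h23
          | exact absurd hij.symm h24 | exact absurd hij.symm h34
    choose vf hvf0 hvfeq lamf muf hlamf hmuf using fun i => hSstruct (Vf i) (hVmem i)
    have hcharinj : Function.Injective (fun i => (lamf i, muf i)) := by
      intro i j hij
      by_contra hij'
      simp only [Prod.mk.injEq] at hij
      apply hEP
      refine ⟨vf i, vf j, lamf i, muf i, ?_, hlamf i, ?_, hmuf i, ?_⟩
      · rw [linearIndependent_fin2]
        constructor
        · simp [hvf0 j]
        · simp only [Matrix.cons_val_one, Matrix.head_cons, Matrix.cons_val_zero]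
          intro a ha
          refine hij' (hVinj ?_)
          rw [hvfeq i, hvfeq j, ← ha]
          rcases eq_or_ne a 0 with rfl | ha0
          · exfalso; exact hvf0 i (by rw [← ha, zero_smul])
          · rw [Submodule.span_singleton_smul_eq (IsUnit.mk0 a ha0)]
      · rw [hij.1]; exact hlamf j
      · rw [hij.2]; exact hmuf j
    -- choose t making the combined eigenvalues distinct
    set Tset : Finset ℝ := Finset.image
      (fun ij : Fin 4 × Fin 4 => (lamf ij.1 - lamf ij.2) / (muf ij.2 - muf ij.1))
      Finset.univ with hTset
    obtain ⟨t, ht⟩ := Infinite.exists_notMem_finset Tset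
    have heinj : Function.Injective (fun i => lamf i + t * muf i) := by
      intro i j hij
      simp only at hij
      by_contra hij'
      rcases eq_or_ne (muf i) (muf j) with hmm | hmm
      · have : lamf i = lamf j := by rw [hmm] at hij; linarith
        exact hij' (hcharinj (by simp [this, hmm]))
      · apply ht
        rw [hTset, Finset.mem_image]
        refine ⟨(i, j), Finset.mem_univ _, ?_⟩
        have hsub : muf j - muf i ≠ 0 := sub_ne_zero.mpr (Ne.symm hmm)
        field_simp
        linarith
    set f : Module.End ℝ V3 := Matrix.toLin' (Am + t • Bm) with hf
    have hevec : ∀ i, f.HasEigenvector (lamf i + t * muf i) (vf i) := by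
      intro i
      refine ⟨Module.End.mem_eigenspace_iff.mpr ?_, hvf0 i⟩
      show Matrix.toLin' (Am + t • Bm) (vf i) = _
      rw [Matrix.toLin'_apply, Matrix.add_mulVec, Matrix.smul_mulVec, hlamf i, hmuf i]
      match_scalars <;> ring
    have hli := Module.End.eigenvectors_linearIndependent' f
      (fun i => lamf i + t * muf i) heinj vf hevec
    have hcard := hli.fintype_card_le_finrank
    simp at hcard
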